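/- Let X be a finite set of size d ≥ 1 and let μ be a probability distribution on the subsets of X (i.e., μ(F) ≥ 0 for all F ⊆ X and Σ_{F ⊆ X} μ(F) = 1) such that μ(X) = 0 and μ(F) ≥ μ(F') whenever F ⊆ F' ⊆ X. Then Σ_{F ⊆ X} (d − |F|)·μ(F) ≥ d·2^{d−1}/(2^d − 1), and equality holds if and only if μ(F) = 1/(2^d − 1) for every proper subset F ⊊ X. -/

import Mathlib

open Finset

-- sum of i * choose d i
lemma aux_sum_mul_choose (d : ℕ) (hd : 1 ≤ d) :
    ∑ i ∈ range (d + 1), i * d.choose i = d * 2 ^ (d - 1) := by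
  obtain ⟨e, rfl⟩ : ∃ e, d = e + 1 := ⟨d - 1, by omega⟩
  rw [Finset.sum_range_succ']
  simp only [Nat.zero_mul, add_zero]
  have : ∀ i ∈ range (e + 1), (i + 1) * (e + 1).choose (i + 1)
      = (e + 1) * e.choose i := by
    intro i _
    rw [mul_comm, ← Nat.add_one_mul_choose_eq]
  rw [Finset.sum_congr rfl this, ← Finset.mul_sum, Nat.sum_range_choose]
  simp

noncomputable def lamA (d j : ℕ) : ℝ :=
  ((2:ℝ) ^ d - 1) * ((d:ℝ) - j) - (d:ℝ) * 2 ^ (d - 1)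

noncomputable def PpA (d j : ℕ) : ℝ :=
  ∑ i ∈ range (j + 1), (d.choose i : ℝ) * lamA d i

noncomputable def wwA (d j : ℕ) : ℝ :=
  PpA d j / ((d.choose j : ℝ) * ((d:ℝ) - j))

lemma aux_sumB (d : ℕ) : ∑ i ∈ range (d + 1), (d.choose i : ℝ) = 2 ^ d := by
  have := Nat.sum_range_choose d
  exact_mod_cast congrArg (Nat.cast (R := ℝ)) this

lemma aux_sumA (d : ℕ) (hd : 1 ≤ d) :
    ∑ i ∈ range (d + 1), (d.choose i : ℝ) * ((d:ℝ) - i) = (d:ℝ) * 2 ^ (d - 1) := by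
  have h1 : ∑ i ∈ range (d + 1), (d.choose i : ℝ) * ((d:ℝ) - i)
      = (d:ℝ) * (∑ i ∈ range (d + 1), (d.choose i : ℝ))
        - ∑ i ∈ range (d + 1), (i : ℝ) * (d.choose i : ℝ) := by
    rw [Finset.mul_sum, ← Finset.sum_sub_distrib]
    exact Finset.sum_congr rfl fun i _ => by ring
  have h2 : ∑ i ∈ range (d + 1), (i : ℝ) * (d.choose i : ℝ) = (d:ℝ) * 2 ^ (d - 1) := by
    have := aux_sum_mul_choose d hd
    have := congrArg (Nat.cast (R := ℝ)) this
    push_cast at this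
    simpa using this
  rw [h1, h2, aux_sumB]
  have h3 : (2:ℝ) ^ d = 2 * 2 ^ (d - 1) := by
    rw [← pow_succ']
    congr 1
    omega
  rw [h3]; ring

lemma PpA_top (d : ℕ) (hd : 1 ≤ d) : PpA d (d - 1) = 0 := by
  have hrange : d - 1 + 1 = d := by omega
  unfold PpA lamA
  rw [hrange]
  have hsplit : ∑ i ∈ range d, (d.choose i : ℝ) *
      (((2:ℝ) ^ d - 1) * ((d:ℝ) - i) - (d:ℝ) * 2 ^ (d - 1))
      = ((2:ℝ) ^ d - 1) * (∑ i ∈ range d, (d.choose i : ℝ) * ((d:ℝ) - i))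
        - (d:ℝ) * 2 ^ (d - 1) * (∑ i ∈ range d, (d.choose i : ℝ)) := by
    rw [Finset.mul_sum, Finset.mul_sum, ← Finset.sum_sub_distrib]
    exact Finset.sum_congr rfl fun i _ => by ring
  have hBr : ∑ i ∈ range d, (d.choose i : ℝ) = 2 ^ d - 1 := by
    have := aux_sumB d
    rw [Finset.sum_range_succ] at this
    simp only [Nat.choose_self, Nat.cast_one] at this
    linarith
  have hAr : ∑ i ∈ range d, (d.choose i : ℝ) * ((d:ℝ) - i) = (d:ℝ) * 2 ^ (d - 1) := by
    have := aux_sumA d hd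
    rw [Finset.sum_range_succ] at this
    simp only [sub_self, mul_zero, add_zero] at this
    exact this
  rw [hsplit, hBr, hAr]; ring

lemma PpA_pos (d j : ℕ) (hj : j + 1 < d) : 0 < PpA d j := by
  set Aj : ℝ := ∑ i ∈ range (j + 1), (d.choose i : ℝ) * ((d:ℝ) - i) with hAj
  set Bj : ℝ := ∑ i ∈ range (j + 1), (d.choose i : ℝ) with hBj
  set A' : ℝ := ∑ i ∈ Ico (j + 1) d, (d.choose i : ℝ) * ((d:ℝ) - i) with hA'
  set B' : ℝ := ∑ i ∈ Ico (j + 1) d, (d.choose i : ℝ) with hB'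
  have hd : 1 ≤ d := by omega
  have hsplitA : Aj + A' = (d:ℝ) * 2 ^ (d - 1) := by
    rw [hAj, hA', Finset.sum_range_add_sum_Ico _ (le_of_lt hj)]
    have := aux_sumA d hd
    rw [Finset.sum_range_succ] at this
    simpa using this
  have hsplitB : Bj + B' = 2 ^ d - 1 := by
    rw [hBj, hB', Finset.sum_range_add_sum_Ico _ (le_of_lt hj)]
    have := aux_sumB d
    rw [Finset.sum_range_succ] at this
    simp only [Nat.choose_self, Nat.cast_one] at this
    linarith
  have hPp : PpA d j = ((2:ℝ) ^ d - 1) * Aj - ((d:ℝ) * 2 ^ (d - 1)) * Bj := by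
    unfold PpA lamA
    rw [hAj, hBj, Finset.mul_sum, Finset.mul_sum, ← Finset.sum_sub_distrib]
    exact Finset.sum_congr rfl fun i _ => by ring
  have hAjlb : ((d:ℝ) - j) * Bj ≤ Aj := by
    rw [hAj, hBj, Finset.mul_sum]
    apply Finset.sum_le_sum
    intro i hi
    rw [Finset.mem_range] at hi
    have hij : (i:ℝ) ≤ j := by exact_mod_cast Nat.lt_succ_iff.mp hi
    have : (0:ℝ) ≤ (d.choose i : ℝ) := Nat.cast_nonneg _
    nlinarith
  have hA'ub : A' ≤ ((d:ℝ) - j - 1) * B' := by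
    rw [hA', hB', Finset.mul_sum]
    apply Finset.sum_le_sum
    intro i hi
    rw [Finset.mem_Ico] at hi
    have hij : (j:ℝ) + 1 ≤ i := by exact_mod_cast hi.1
    have : (0:ℝ) ≤ (d.choose i : ℝ) := Nat.cast_nonneg _
    nlinarith
  have hBjpos : 0 < Bj := by
    rw [hBj]
    apply Finset.sum_pos' (fun i _ => Nat.cast_nonneg _)
    exact ⟨0, Finset.mem_range.mpr (Nat.succ_pos j), by simp⟩
  have hB'pos : 0 < B' := by
    rw [hB']
    apply Finset.sum_pos' (fun i _ => Nat.cast_nonneg _)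
    refine ⟨j + 1, Finset.mem_Ico.mpr ⟨le_refl _, hj⟩, ?_⟩
    have : 0 < d.choose (j + 1) := Nat.choose_pos (by omega)
    exact_mod_cast this
  have ht : (0:ℝ) < 2 ^ d - 1 := by
    have : (2:ℝ) ^ 1 ≤ 2 ^ d := pow_le_pow_right₀ (by norm_num) hd
    norm_num at this ⊢; linarith
  have hkey : A' * Bj < Aj * B' := by
    calc A' * Bj ≤ (((d:ℝ) - j - 1) * B') * Bj := by nlinarith
    _ < (((d:ℝ) - j) * B') * Bj := by nlinarith
    _ ≤ Aj * B' := by nlinarith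
  have hmul : 0 < PpA d j * (Bj + B') := by
    have : PpA d j * (Bj + B') = ((2:ℝ) ^ d - 1) * (Aj * B' - A' * Bj) := by
      rw [hPp]
      have hT : ((d:ℝ) * 2 ^ (d - 1)) * (Bj + B') = ((2:ℝ) ^ d - 1) * (Aj + A') := by
        rw [hsplitA, hsplitB]; ring
      nlinarith [hT]
    rw [this]
    apply mul_pos ht
    linarith
  nlinarith [hBjpos, hB'pos]

lemma wwA_denom_pos (d j : ℕ) (hj : j < d) : 0 < (d.choose j : ℝ) * ((d:ℝ) - j) := by
  apply mul_pos
  · exact_mod_cast Nat.choose_pos (le_of_lt hj)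
  · have : (j:ℝ) < d := by exact_mod_cast hj
    linarith

lemma wwA_nonneg (d j : ℕ) (hd : 1 ≤ d) (hj : j ≤ d - 1) : 0 ≤ wwA d j := by
  unfold wwA
  apply div_nonneg
  · rcases eq_or_lt_of_le hj with h | h
    · rw [h, PpA_top d hd]
    · exact (PpA_pos d j (by omega)).le
  · exact (wwA_denom_pos d j (by omega)).le

lemma wwA_top (d : ℕ) (hd : 1 ≤ d) : wwA d (d - 1) = 0 := by
  unfold wwA
  rw [PpA_top d hd, zero_div]

lemma wwA_pos (d j : ℕ) (hj : j + 1 < d) : 0 < wwA d j := by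
  unfold wwA
  exact div_pos (PpA_pos d j hj) (wwA_denom_pos d j (by omega))

lemma wwA_rec (d j : ℕ) (hd : 1 ≤ d) (hj : j ≤ d - 1) :
    ((d:ℝ) - j) * wwA d j - (j:ℝ) * wwA d (j - 1) = lamA d j := by
  rcases Nat.eq_zero_or_pos j with rfl | hjpos
  · have hw0 : wwA d 0 = lamA d 0 / (d:ℝ) := by
      unfold wwA PpA
      simp
    have hdpos : (0:ℝ) < (d:ℝ) := by exact_mod_cast hd
    rw [hw0]
    simp only [Nat.cast_zero, zero_mul, sub_zero]
    field_simp
  · obtain ⟨k, rfl⟩ : ∃ k, j = k + 1 := ⟨j - 1, by omega⟩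
    have hk1 : k + 1 < d := by omega
    have hck : (0:ℝ) < (d.choose k : ℝ) := by exact_mod_cast Nat.choose_pos (by omega)
    have hck1 : (0:ℝ) < (d.choose (k+1) : ℝ) := by exact_mod_cast Nat.choose_pos (by omega)
    have hd1 : (0:ℝ) < (d:ℝ) - ((k:ℝ)+1) := by
      have : ((k:ℝ) + 1) < d := by exact_mod_cast hk1
      linarith
    have hd2 : (0:ℝ) < (d:ℝ) - k := by linarith
    have hchoose : (d.choose (k+1) : ℝ) * ((k:ℝ)+1) = (d.choose k : ℝ) * ((d:ℝ) - k) := by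
      have h := Nat.choose_succ_right_eq d k
      have h2 := congrArg (Nat.cast (R := ℝ)) h
      push_cast at h2
      rw [h2]
      congr 1
      have hkd : k ≤ d := by omega
      push_cast [Nat.cast_sub hkd]
      ring
    have hPstep : PpA d (k+1) = PpA d k + (d.choose (k+1) : ℝ) * lamA d (k+1) := by
      unfold PpA
      rw [Finset.sum_range_succ]
    have e1 : ((d:ℝ) - ((k:ℝ)+1)) * wwA d (k+1) = PpA d (k+1) / (d.choose (k+1):ℝ) := by
      unfold wwA
      push_cast
      rw [mul_div_assoc', div_eq_div_iff (by positivity) (ne_of_gt hck1)]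
      ring
    have e2 : ((k:ℝ)+1) * wwA d k = PpA d k / (d.choose (k+1):ℝ) := by
      unfold wwA
      rw [mul_div_assoc', div_eq_div_iff (by positivity) (ne_of_gt hck1)]
      linear_combination PpA d k * hchoose
    push_cast
    rw [e1, e2, hPstep]
    field_simp
    ring

lemma reindexA {α : Type*} [DecidableEq α] (X : Finset α) (f : Finset α → ℝ) :
    ∑ F ∈ X.powerset, ∑ x ∈ X \ F, f (insert x F)
    = ∑ G ∈ X.powerset, ∑ x ∈ G, f G := by
  rw [Finset.sum_sigma', Finset.sum_sigma']
  refine Finset.sum_nbij' (fun p => ⟨insert p.2 p.1, p.2⟩)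
    (fun p => ⟨p.1.erase p.2, p.2⟩) ?_ ?_ ?_ ?_ ?_
  · rintro ⟨F, x⟩ hp
    simp only [Finset.mem_sigma, Finset.mem_powerset, Finset.mem_sdiff] at hp ⊢
    exact ⟨Finset.insert_subset (hp.2.1) hp.1, Finset.mem_insert_self _ _⟩
  · rintro ⟨G, x⟩ hp
    simp only [Finset.mem_sigma, Finset.mem_powerset, Finset.mem_sdiff] at hp ⊢
    exact ⟨(Finset.erase_subset _ _).trans hp.1, hp.1 hp.2, Finset.notMem_erase _ _⟩
  · rintro ⟨F, x⟩ hp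
    simp only [Finset.mem_sigma, Finset.mem_powerset, Finset.mem_sdiff] at hp
    simp [Finset.erase_insert hp.2.2]
  · rintro ⟨G, x⟩ hp
    simp only [Finset.mem_sigma, Finset.mem_powerset, Finset.mem_sdiff] at hp
    simp [Finset.insert_erase hp.2]
  · rintro ⟨F, x⟩ hp
    rfl

theorem stmt_6 {α : Type*} [DecidableEq α] (X : Finset α) (d : ℕ) (hd : 1 ≤ d)
    (hX : X.card = d) (μ : Finset α → ℝ)
    (hnonneg : ∀ F ⊆ X, 0 ≤ μ F)
    (htotal : ∑ F ∈ X.powerset, μ F = 1)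
    (hμX : μ X = 0)
    (hmono : ∀ F F' : Finset α, F ⊆ F' → F' ⊆ X → μ F' ≤ μ F) :
    (d : ℝ) * 2 ^ (d - 1) / (2 ^ d - 1) ≤
        ∑ F ∈ X.powerset, ((d : ℝ) - F.card) * μ F ∧
      (∑ F ∈ X.powerset, ((d : ℝ) - F.card) * μ F =
          (d : ℝ) * 2 ^ (d - 1) / (2 ^ d - 1) ↔
        ∀ F ⊆ X, F ≠ X → μ F = 1 / (2 ^ d - 1)) := by
  classical
  have ht : (0:ℝ) < 2 ^ d - 1 := by
    have : (2:ℝ) ^ 1 ≤ 2 ^ d := pow_le_pow_right₀ (by norm_num) hd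
    norm_num at this ⊢; linarith
  set S : ℝ := ∑ F ∈ X.powerset, ((d : ℝ) - F.card) * μ F with hS
  have hcard_le : ∀ F ∈ X.powerset, F.card ≤ d := fun F hF => by
    rw [← hX]; exact Finset.card_le_card (Finset.mem_powerset.mp hF)
  have hcard_lt : ∀ F ∈ X.powerset, F ≠ X → F.card < d := by
    intro F hF hFX
    rw [← hX]
    exact Finset.card_lt_card (lt_of_le_of_ne (Finset.mem_powerset.mp hF) hFX)
  -- the key identity
  have hEid : ∑ F ∈ X.powerset, ∑ x ∈ X \ F, wwA d F.card * (μ F - μ (insert x F))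
      = ((2:ℝ) ^ d - 1) * S - (d:ℝ) * 2 ^ (d - 1) := by
    have hsplit : ∀ F ∈ X.powerset,
        ∑ x ∈ X \ F, wwA d F.card * (μ F - μ (insert x F))
        = ((d:ℝ) - F.card) * wwA d F.card * μ F
          - ∑ x ∈ X \ F, wwA d ((insert x F).card - 1) * μ (insert x F) := by
      intro F hF
      have hFX : F ⊆ X := Finset.mem_powerset.mp hF
      have h1 : ∑ x ∈ X \ F, wwA d F.card * (μ F - μ (insert x F))
          = ∑ x ∈ X \ F, (wwA d F.card * μ F - wwA d F.card * μ (insert x F)) := by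
        exact Finset.sum_congr rfl fun x _ => by ring
      rw [h1, Finset.sum_sub_distrib, Finset.sum_const]
      congr 1
      · rw [Finset.card_sdiff_of_subset hFX, hX, nsmul_eq_mul, Nat.cast_sub (hcard_le F hF)]
        ring
      · apply Finset.sum_congr rfl
        intro x hx
        have hxF : x ∉ F := (Finset.mem_sdiff.mp hx).2
        rw [Finset.card_insert_of_notMem hxF, Nat.add_sub_cancel]
    rw [Finset.sum_congr rfl hsplit, Finset.sum_sub_distrib,
        reindexA X (fun G => wwA d (G.card - 1) * μ G)]
    have h2 : ∀ G ∈ X.powerset, ∑ x ∈ G, wwA d (G.card - 1) * μ G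
        = (G.card : ℝ) * wwA d (G.card - 1) * μ G := by
      intro G _
      rw [Finset.sum_const, nsmul_eq_mul]; ring
    rw [Finset.sum_congr rfl h2, ← Finset.sum_sub_distrib]
    have h3 : ∀ F ∈ X.powerset,
        ((d:ℝ) - F.card) * wwA d F.card * μ F - (F.card : ℝ) * wwA d (F.card - 1) * μ F
        = (((2:ℝ) ^ d - 1) * ((d:ℝ) - F.card) - (d:ℝ) * 2 ^ (d - 1)) * μ F := by
      intro F hF
      by_cases hFX : F = X
      · subst hFX
        rw [hμX]; ring
      · have hlt : F.card < d := hcard_lt F hF hFX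
        have := wwA_rec d F.card hd (by omega)
        unfold lamA at this
        linear_combination μ F * this
    rw [Finset.sum_congr rfl h3]
    have h4 : ∀ F ∈ X.powerset,
        (((2:ℝ) ^ d - 1) * ((d:ℝ) - F.card) - (d:ℝ) * 2 ^ (d - 1)) * μ F
        = ((2:ℝ) ^ d - 1) * (((d:ℝ) - F.card) * μ F) - ((d:ℝ) * 2 ^ (d - 1)) * μ F := by
      intro F _; ring
    rw [Finset.sum_congr rfl h4, Finset.sum_sub_distrib, ← Finset.mul_sum, ← Finset.mul_sum,
        htotal, ← hS]
    ring
  -- nonnegativity of each term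
  have hterm : ∀ F ∈ X.powerset, ∀ x ∈ X \ F,
      0 ≤ wwA d F.card * (μ F - μ (insert x F)) := by
    intro F hF x hx
    have hFX : F ⊆ X := Finset.mem_powerset.mp hF
    have hxX : x ∈ X := (Finset.mem_sdiff.mp hx).1
    have hxF : x ∉ F := (Finset.mem_sdiff.mp hx).2
    have hFne : F ≠ X := by
      intro h; subst h; exact hxF hxX
    have hlt : F.card < d := hcard_lt F hF hFne
    apply mul_nonneg (wwA_nonneg d F.card hd (by omega))
    have := hmono F (insert x F) (Finset.subset_insert _ _) (Finset.insert_subset hxX hFX)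
    linarith
  have hE_nonneg : 0 ≤ ∑ F ∈ X.powerset, ∑ x ∈ X \ F, wwA d F.card * (μ F - μ (insert x F)) :=
    Finset.sum_nonneg fun F hF => Finset.sum_nonneg (hterm F hF)
  constructor
  · rw [div_le_iff₀ ht]
    nlinarith [hEid, hE_nonneg]
  constructor
  · -- equality implies uniform
    intro heq
    have hE0 : ∑ F ∈ X.powerset, ∑ x ∈ X \ F, wwA d F.card * (μ F - μ (insert x F)) = 0 := by
      rw [hEid, heq]
      field_simp
      ring
    have hzero : ∀ F ∈ X.powerset, ∀ x ∈ X \ F,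
        wwA d F.card * (μ F - μ (insert x F)) = 0 := by
      intro F hF x hx
      have h1 := (Finset.sum_eq_zero_iff_of_nonneg
        (fun F hF => Finset.sum_nonneg (hterm F hF))).mp hE0 F hF
      exact (Finset.sum_eq_zero_iff_of_nonneg (hterm F hF)).mp h1 x hx
    -- μ constant on proper subsets
    have hconst : ∀ n : ℕ, ∀ F, F ⊆ X → F ≠ X → F.card = n → μ F = μ ∅ := by
      intro n
      induction n with
      | zero => intro F _ _ hc; rw [Finset.card_eq_zero.mp hc]
      | succ n ih =>
        intro F hF hFX hc
        obtain ⟨x, hx⟩ : F.Nonempty := Finset.card_pos.mp (by omega)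
        set F' := F.erase x with hF'
        have hF'sub : F' ⊆ X := (Finset.erase_subset _ _).trans hF
        have hc' : F'.card = n := by
          rw [hF', Finset.card_erase_of_mem hx, hc]
          omega
        have hFlt : F.card < d := hcard_lt F (Finset.mem_powerset.mpr hF) hFX
        have hF'lt : F'.card + 1 < d := by omega
        have hxX : x ∈ X \ F' := by
          rw [Finset.mem_sdiff]
          exact ⟨hF hx, Finset.notMem_erase _ _⟩
        have h0 := hzero F' (Finset.mem_powerset.mpr hF'sub) x hxX
        have hwpos := wwA_pos d F'.card hF'lt
        have hμeq : μ F' = μ (insert x F') := by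
          rcases mul_eq_zero.mp h0 with h | h
          · exact absurd h (ne_of_gt hwpos)
          · linarith [sub_eq_zero.mp h]
        rw [Finset.insert_erase hx] at hμeq
        have hF'X : F' ≠ X := by
          intro h
          have := congrArg Finset.card h
          rw [hc', hX] at this
          omega
        rw [← hμeq]
        exact ih F' hF'sub hF'X hc'
    -- compute μ ∅
    have hcount : (X.powerset.erase X).card = 2 ^ d - 1 := by
      rw [Finset.card_erase_of_mem (Finset.mem_powerset_self X), Finset.card_powerset, hX]
    have hsum : ∑ F ∈ X.powerset, μ F = μ X + ∑ F ∈ X.powerset.erase X, μ F :=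
      (Finset.add_sum_erase _ _ (Finset.mem_powerset_self X)).symm
    have hsum2 : ∑ F ∈ X.powerset.erase X, μ F = ((2 ^ d - 1 : ℕ) : ℝ) * μ ∅ := by
      rw [Finset.sum_congr rfl (fun F hF => ?_), Finset.sum_const, hcount, nsmul_eq_mul]
      rw [Finset.mem_erase] at hF
      exact hconst F.card F (Finset.mem_powerset.mp hF.2) hF.1 rfl
    have hcast : ((2 ^ d - 1 : ℕ) : ℝ) = 2 ^ d - 1 := by
      have : 1 ≤ 2 ^ d := Nat.one_le_two_pow
      push_cast [Nat.cast_sub this]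
      ring
    have hμ0 : μ ∅ = 1 / (2 ^ d - 1) := by
      rw [htotal, hμX, hsum2, hcast] at hsum
      rw [eq_div_iff (ne_of_gt ht)]
      linarith
    intro F hF hFX
    rw [hconst F.card F hF hFX rfl, hμ0]
  · -- uniform implies equality
    intro huni
    have hE0 : ∑ F ∈ X.powerset, ∑ x ∈ X \ F, wwA d F.card * (μ F - μ (insert x F)) = 0 := by
      apply Finset.sum_eq_zero
      intro F hF
      apply Finset.sum_eq_zero
      intro x hx
      have hFX : F ⊆ X := Finset.mem_powerset.mp hF
      have hxX : x ∈ X := (Finset.mem_sdiff.mp hx).1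
      have hxF : x ∉ F := (Finset.mem_sdiff.mp hx).2
      have hFne : F ≠ X := fun h => hxF (h ▸ hxX)
      have hlt : F.card < d := hcard_lt F hF hFne
      by_cases hc : F.card + 1 < d
      · have h1 : insert x F ≠ X := by
          intro h
          have := congrArg Finset.card h
          rw [Finset.card_insert_of_notMem hxF, hX] at this
          omega
        rw [huni F hFX hFne, huni (insert x F) (Finset.insert_subset hxX hFX) h1]
        ring
      · have hc' : F.card = d - 1 := by omega
        rw [hc', wwA_top d hd]
        ring
    rw [hE0] at hEid
    rw [eq_div_iff (ne_of_gt ht)]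
    linarith [hEid]
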